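/- For every N ≥ 1, the word 010·∏_{n=1}^{N}(c_{2n+1}·c_{2n+1}·c_{2n+2}) is a prefix of the Fibonacci infinite word f. In other words, f = 010·∏_{n≥1} c_{2n+1}² c_{2n+2}. -/
import Mathlib


/-- The finite Fibonacci words over the alphabet {0,1}: f 1 = 1, f 2 = 0,
and f n = f (n-1) ++ f (n-2) for n ≥ 3. -/
def fibWord : ℕ → List ℕ
  | 0 => []
  | 1 => [1]
  | 2 => [0]
  | n + 3 => fibWord (n + 2) ++ fibWord (n + 1)

/-- A finite word is a prefix of the Fibonacci infinite word iff it is a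
prefix of some finite Fibonacci word f m with m ≥ 2. -/
def IsFibPrefix (x : List ℕ) : Prop := ∃ m, 2 ≤ m ∧ x <+: fibWord m

/-- The central word p n: the Fibonacci word f n with its last two letters removed. -/
def centralWord (n : ℕ) : List ℕ := (fibWord n).dropLast.dropLast

/-- The lower Christoffel word c n = 0 · p n · 1, for n ≥ 3. -/
def chrisWord (n : ℕ) : List ℕ := [0] ++ centralWord n ++ [1]

/-- Auxiliary recursive definition of central words. -/
def myP : ℕ → List ℕ
  | 0 => []
  | 1 => []
  | 2 => []
  | 3 => []
  | n + 4 => fibWord (n + 2) ++ myP (n + 3)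

/-- Alternating tail. -/
def tl (n : ℕ) : List ℕ := if n % 2 = 0 then [0, 1] else [1, 0]

lemma tl_succ_succ (n : ℕ) : tl (n + 2) = tl n := by
  simp [tl, Nat.add_mod_right]

lemma AB : ∀ n : ℕ, fibWord (n + 3) = myP (n + 3) ++ tl n ∧
    fibWord (n + 1) ++ fibWord (n + 2) = myP (n + 3) ++ tl (n + 1) := by
  intro n
  induction n with
  | zero => constructor <;> decide
  | succ n ih =>
    obtain ⟨ha, hb⟩ := ih
    refine ⟨?_, ?_⟩
    · show fibWord (n + 4) = myP (n + 4) ++ tl (n + 1)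
      have h1 : fibWord (n + 4) = fibWord (n + 2) ++ (fibWord (n + 1) ++ fibWord (n + 2)) := by
        show fibWord (n + 3) ++ fibWord (n + 2) = _
        show (fibWord (n + 2) ++ fibWord (n + 1)) ++ fibWord (n + 2) = _
        rw [List.append_assoc]
      rw [h1, hb]
      show _ = (fibWord (n + 2) ++ myP (n + 3)) ++ tl (n + 1)
      rw [List.append_assoc]
    · show fibWord (n + 2) ++ fibWord (n + 3) = myP (n + 4) ++ tl (n + 2)
      rw [ha, tl_succ_succ]
      show _ = (fibWord (n + 2) ++ myP (n + 3)) ++ tl n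
      rw [List.append_assoc]

lemma central_eq (n : ℕ) : centralWord (n + 3) = myP (n + 3) := by
  have h := (AB n).1
  unfold centralWord
  rw [h]
  unfold tl
  split <;>
  · rw [show ∀ (x : List ℕ) (a b : ℕ), x ++ [a, b] = (x ++ [a]) ++ [b] by intros; simp,
      List.dropLast_concat, List.dropLast_concat]

lemma chris_eq (n : ℕ) : chrisWord (n + 3) = [0] ++ myP (n + 3) ++ [1] := by
  rw [chrisWord, central_eq]

lemma append_cons (a b : List ℕ) (P : List ℕ) (h : a ++ b = P ++ [1, 0]) :
    ∀ X : List ℕ, a ++ (b ++ X) = P ++ 1 :: 0 :: X := by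
  intro X
  rw [← List.append_assoc, h, List.append_assoc]
  rfl

lemma append_cons3 (a b : List ℕ) (P : List ℕ) (h : b ++ (a ++ b) = P ++ [1, 0]) :
    ∀ X : List ℕ, b ++ (a ++ (b ++ X)) = P ++ 1 :: 0 :: X := by
  intro X
  rw [show b ++ (a ++ (b ++ X)) = (b ++ (a ++ b)) ++ X by simp, h, List.append_assoc]
  rfl

/-- Main identity: W N ++ [0] ++ fibWord (2N+1) = fibWord (2N+5). -/
lemma main : ∀ N : ℕ,
    ([0, 1, 0] ++ ((List.range N).map
      (fun i => chrisWord (2 * (i + 1) + 1) ++ chrisWord (2 * (i + 1) + 1) ++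
        chrisWord (2 * (i + 1) + 2))).flatten) ++ ([0] ++ fibWord (2 * N + 1))
      = fibWord (2 * N + 5) := by
  intro N
  induction N with
  | zero => decide
  | succ N ih =>
    have hb : fibWord (2 * N + 1) ++ fibWord (2 * N + 2) = myP (2 * N + 3) ++ [1, 0] := by
      have := (AB (2 * N)).2
      rwa [show tl (2 * N + 1) = [1, 0] by simp only [tl]; rw [if_neg (by omega)]] at this
    have ha : fibWord (2 * N + 4) = myP (2 * N + 4) ++ [1, 0] := by
      have := (AB (2 * N + 1)).1
      rwa [show tl (2 * N + 1) = [1, 0] by simp only [tl]; rw [if_neg (by omega)]] at this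
    -- abbreviations
    set a := fibWord (2 * N + 1) with ha1
    set b := fibWord (2 * N + 2) with hb1
    have f3 : fibWord (2 * N + 3) = b ++ a := rfl
    have f4 : fibWord (2 * N + 4) = (b ++ a) ++ b := rfl
    have hbab : b ++ (a ++ b) = myP (2 * N + 4) ++ [1, 0] := by
      rw [← ha, f4, List.append_assoc]
    rw [List.range_succ, List.map_append, List.flatten_append]
    have idx1 : 2 * (N + 1) + 1 = (2 * N) + 3 := by ring
    have idx2 : 2 * (N + 1) + 2 = (2 * N + 1) + 3 := by ring
    have idxf : 2 * (N + 1) + 5 = 2 * N + 7 := by ring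
    have f5 : fibWord (2 * N + 5) = ((b ++ a) ++ b) ++ (b ++ a) := by
      show fibWord (2 * N + 4) ++ fibWord (2 * N + 3) = _
      rw [f4, f3]
    have f7 : fibWord (2 * N + 7) = fibWord (2 * N + 5) ++ (((b ++ a) ++ b) ++ fibWord (2 * N + 5)) := by
      show fibWord (2 * N + 6) ++ fibWord (2 * N + 5) = _
      show (fibWord (2 * N + 5) ++ fibWord (2 * N + 4)) ++ fibWord (2 * N + 5) = _
      rw [f4, List.append_assoc]
    simp only [List.map_cons, List.map_nil, List.flatten_cons, List.flatten_nil,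
      List.append_nil, idx1, idx2, idxf, chris_eq]
    rw [f7]
    nth_rw 2 [f5]
    rw [← ih, f3]
    simp only [List.append_assoc, List.singleton_append, List.cons_append, List.nil_append]
    rw [append_cons a b _ hb, append_cons a b _ hb, append_cons3 a b _ hbab,
      show myP (2 * N + 1 + 3) = myP (2 * N + 4) by norm_num]

theorem stmt14 (N : ℕ) (hN : 1 ≤ N) :
    IsFibPrefix ([0, 1, 0] ++
      ((List.range N).map
        (fun i => chrisWord (2 * (i + 1) + 1) ++ chrisWord (2 * (i + 1) + 1) ++
          chrisWord (2 * (i + 1) + 2))).flatten) := by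
  exact ⟨2 * N + 5, by omega, ⟨[0] ++ fibWord (2 * N + 1), main N⟩⟩
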